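/- Let G be a Lie group and let X be a multiplicative vector field on G. Then X is compatible with the inversion: for every g ∈ G, X_{g⁻¹} = − T_e L_{g⁻¹} ( T_g R_{g⁻¹} (X_g) ). -/

import Mathlib

open scoped Manifold

/-- A multiplicative vector field on a Lie group is compatible with
inversion: `X_{g⁻¹} = − T_e L_{g⁻¹} ( T_g R_{g⁻¹} (X_g) )`. -/
theorem multiplicative_vector_field_compatible_with_inversion
    {E : Type*} [NormedAddCommGroup E] [NormedSpace ℝ E] [FiniteDimensional ℝ E]
    {H : Type*} [TopologicalSpace H] {I : ModelWithCorners ℝ E H}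
    {G : Type*} [TopologicalSpace G] [ChartedSpace H G] [Group G]
    [IsManifold I (⊤ : ℕ∞) G] [LieGroup I (⊤ : ℕ∞) G]
    (X : ∀ g : G, TangentSpace I g)
    (hX : ∀ g h : G, X (g * h) =
        mfderiv I I (fun x => g * x) h (X h) + mfderiv I I (fun x => x * h) g (X g)) :
    ∀ g : G, X g⁻¹ =
      - mfderiv I I (fun x => g⁻¹ * x) (1 : G) (mfderiv I I (fun x => x * g⁻¹) g (X g)) := by
  intro g
  -- X 1 = 0
  have h1 : X (1 : G) = 0 := by
    have h := hX 1 1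
    rw [show (fun x : G => (1:G) * x) = id from funext fun x => one_mul x,
      show (fun x : G => x * (1:G)) = id from funext fun x => mul_one x,
      mfderiv_id, one_mul] at h
    simp only [ContinuousLinearMap.id_apply] at h
    have h' : X (1 : G) + 0 = X 1 + X 1 := by simpa using h
    exact (add_left_cancel h').symm
  have key : mfderiv I I (fun x => g * x) g⁻¹ (X g⁻¹)
      + mfderiv I I (fun x => x * g⁻¹) g (X g) = 0 := by
    have h := hX g g⁻¹
    rw [mul_inv_cancel, h1] at h
    exact h.symm
  have hkey : mfderiv I I (fun x => g * x) g⁻¹ (X g⁻¹)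
      = - mfderiv I I (fun x => x * g⁻¹) g (X g) :=
    eq_neg_of_add_eq_zero_left key
  -- composition: T L_{g⁻¹} ∘ T L_g = id
  have hcomp : mfderiv I I ((fun x => g⁻¹ * x) ∘ (fun x => g * x)) g⁻¹
      = (mfderiv I I (fun x => g⁻¹ * x) (g * g⁻¹)).comp
        (mfderiv I I (fun x => g * x) g⁻¹) :=
    mfderiv_comp g⁻¹ mdifferentiableAt_mul_left mdifferentiableAt_mul_left
  have hfun : ((fun x : G => g⁻¹ * x) ∘ (fun x => g * x)) = id := by
    funext x; simp [Function.comp]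
  rw [hfun, mfderiv_id, mul_inv_cancel] at hcomp
  have hx : X g⁻¹ = mfderiv I I (fun x => g⁻¹ * x) (1 : G)
      (mfderiv I I (fun x => g * x) g⁻¹ (X g⁻¹)) := by
    have := congrArg (fun L => L (X g⁻¹)) hcomp
    exact this
  rw [hx, hkey]; exact map_neg _ _
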